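/- For the regular 24-cell inscribed in a unit 4-sphere, the product of the squared lengths of all its chords equals 6^96. -/

import Mathlib

abbrev Idx24 := ({p : Fin 4 × Fin 4 // p.1 < p.2} × (Bool × Bool))

def cCoord (q : Idx24) (m : Fin 4) : ℤ :=
  if m = q.1.1.1 then (if q.2.1 then 1 else -1)
  else if m = q.1.1.2 then (if q.2.2 then 1 else -1) else 0

def Nq (a b : Idx24) : ℤ := ∑ m : Fin 4, (cCoord a m - cCoord b m) ^ 2

lemma Nq_symm (a b : Idx24) : Nq a b = Nq b a := by
  unfold Nq; apply Finset.sum_congr rfl; intro m _; ring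

def FN : Sym2 Idx24 → ℤ := Sym2.lift ⟨Nq, Nq_symm⟩

lemma FN_prod : ∏ z ∈ Finset.univ.filter (fun z : Sym2 Idx24 => ¬z.IsDiag), FN z
    = 2 ^ 276 * 6 ^ 96 := by
  set_option maxRecDepth 10000 in decide

lemma card_offdiag :
    (Finset.univ.filter (fun z : Sym2 Idx24 => ¬z.IsDiag)).card = 276 := by
  set_option maxRecDepth 10000 in decide

open scoped Classical in
theorem cell24_prod_squared_chords
    (v : ({p : Fin 4 × Fin 4 // p.1 < p.2} × (Bool × Bool)) → EuclideanSpace ℝ (Fin 4))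
    (hv : ∀ q, v q = fun m =>
      (if m = q.1.1.1 then (if q.2.1 then 1 else -1)
       else if m = q.1.1.2 then (if q.2.2 then 1 else -1) else 0) / Real.sqrt 2)
    (f : Sym2 ({p : Fin 4 × Fin 4 // p.1 < p.2} × (Bool × Bool)) → ℝ)
    (hf : ∀ a b, f s(a, b) = ‖v a - v b‖) :
    ∏ z ∈ Finset.univ.filter (fun z => ¬z.IsDiag), f z ^ 2 = (6 : ℝ) ^ 96 := by
  have hvm : ∀ q m, v q m = (cCoord q m : ℝ) / Real.sqrt 2 := by
    intro q m
    rw [hv q]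
    simp only [cCoord]
    split_ifs <;> norm_num
  have key : ∀ z : Sym2 Idx24, f z ^ 2 = ((FN z : ℤ) : ℝ) / 2 := by
    intro z
    induction z using Sym2.ind with
    | _ a b =>
      rw [hf a b]
      have h1 : ‖v a - v b‖ ^ 2 = ∑ m : Fin 4, (v a m - v b m) ^ 2 := by
        rw [EuclideanSpace.norm_eq, Real.sq_sqrt (by positivity)]
        apply Finset.sum_congr rfl
        intro m _
        have : (v a - v b) m = v a m - v b m := rfl
        rw [this, Real.norm_eq_abs, sq_abs]
      rw [h1]
      have hs : Real.sqrt 2 ^ 2 = 2 := Real.sq_sqrt (by norm_num)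
      have h2 : ∀ m : Fin 4,
          (v a m - v b m) ^ 2 = ((cCoord a m - cCoord b m : ℤ) : ℝ) ^ 2 / 2 := by
        intro m
        rw [hvm, hvm, div_sub_div_same, div_pow, hs]
        push_cast
        ring
      simp only [h2]
      rw [← Finset.sum_div]
      show _ = ((Nq a b : ℤ) : ℝ) / 2
      unfold Nq
      push_cast
      ring
  rw [Finset.prod_congr rfl
    (fun z (_ : z ∈ Finset.univ.filter (fun z : Sym2 Idx24 => ¬z.IsDiag)) => key z)]
  rw [Finset.prod_div_distrib, Finset.prod_const, ← Int.cast_prod, FN_prod, card_offdiag]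
  push_cast
  rw [mul_comm, mul_div_assoc, div_self (by positivity), mul_one]
  norm_num
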